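/- For every positive integer n with n ∉ {1, 2, 4, 6}, there exists a finite idempotent semigroup of order at least n that has no subsemigroup of order exactly n. -/

import Mathlib

open Finset Sum

/-- The rectangular band on `α × β`. -/
def rectSG (α β : Type*) : Semigroup (α × β) :=
  { mul := fun x y => (x.1, y.2)
    mul_assoc := fun _ _ _ => rfl }

lemma rect_card'' {α β : Type*} [Fintype α] [Fintype β] [DecidableEq α] [DecidableEq β]
    (T : Finset (α × β)) (hT : ∀ x ∈ T, ∀ y ∈ T, (x.1, y.2) ∈ T) :
    T.card = 0 ∨ ∃ i j, 1 ≤ i ∧ i ≤ Fintype.card α ∧ 1 ≤ j ∧ j ≤ Fintype.card β ∧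
      T.card = i * j := by
  rcases T.eq_empty_or_nonempty with rfl | hne
  · left; simp
  · right
    have hTeq : T = (T.image Prod.fst) ×ˢ (T.image Prod.snd) := by
      ext ⟨p, q⟩
      simp only [mem_product, mem_image]
      constructor
      · intro hpq; exact ⟨⟨(p, q), hpq, rfl⟩, ⟨(p, q), hpq, rfl⟩⟩
      · rintro ⟨⟨x, hx, hx1⟩, ⟨y, hy, hy2⟩⟩
        have := hT x hx y hy
        rwa [hx1, hy2] at this
    refine ⟨(T.image Prod.fst).card, (T.image Prod.snd).card, ?_, card_le_univ _,
      ?_, card_le_univ _, ?_⟩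
    · exact card_pos.2 (hne.image _)
    · exact card_pos.2 (hne.image _)
    · conv_lhs => rw [hTeq]
      exact card_product _ _

/-- Existence statement for a rectangular band avoiding subsemigroups of size n. -/
lemma rect_band (a b n : ℕ) (hn : 0 < n) (hle : n ≤ a * b)
    (harith : ∀ i j, 1 ≤ i → i ≤ a → 1 ≤ j → j ≤ b → i * j ≠ n) :
    ∃ (S : Type) (_ : Semigroup S) (_ : Fintype S),
      (∀ x : S, x * x = x) ∧ n ≤ Fintype.card S ∧
      ¬ ∃ T : Finset S, T.card = n ∧ ∀ x ∈ T, ∀ y ∈ T, x * y ∈ T := by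
  refine ⟨Fin a × Fin b, rectSG (Fin a) (Fin b), inferInstance, fun x => rfl, ?_, ?_⟩
  · simpa using hle
  · rintro ⟨T, hcard, hclosed⟩
    rcases rect_card'' T (fun x hx y hy => hclosed x hx y hy) with h0 |
      ⟨i, j, hi1, hi2, hj1, hj2, hij⟩
    · omega
    · simp only [Fintype.card_fin] at hi2 hj2
      exact harith i j hi1 hi2 hj1 hj2 (by omega)

/-- A band which is a 2x2 rectangular band on top of a 3xb rectangular band. -/
def sumSG (b : ℕ) : Semigroup ((Fin 2 × Fin 2) ⊕ (Fin 3 × Fin (b + 1))) :=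
  { mul := fun x y => match x, y with
      | .inl x, .inl y => .inl (x.1, y.2)
      | .inl _, .inr w => .inr (0, w.2)
      | .inr w, .inl _ => .inr (w.1, 0)
      | .inr w, .inr v => .inr (w.1, v.2)
    mul_assoc := by rintro (x | x) (y | y) (z | z) <;> rfl }

theorem stmt_12 (n : ℕ) (hn : 0 < n) (h : n ∉ ({1, 2, 4, 6} : Set ℕ)) :
    ∃ (S : Type) (_ : Semigroup S) (_ : Fintype S),
      (∀ x : S, x * x = x) ∧ n ≤ Fintype.card S ∧
      ¬ ∃ T : Finset S, T.card = n ∧ ∀ x ∈ T, ∀ y ∈ T, x * y ∈ T := by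
  simp only [Set.mem_insert_iff, Set.mem_singleton_iff, not_or] at h
  obtain ⟨h1, h2, h4, h6⟩ := h
  by_cases hodd : n % 2 = 1
  · -- odd case: 2 × (n-1) rectangular band
    refine rect_band 2 (n - 1) n hn (by omega) ?_
    intro i j hi1 hi2 hj1 hj2
    interval_cases i <;> omega
  · by_cases h3 : n % 3 = 0
    · -- n divisible by 6, n ≥ 12
      have h12 : 12 ≤ n := by omega
      set b : ℕ := n / 3 - 2 with hb
      refine ⟨(Fin 2 × Fin 2) ⊕ (Fin 3 × Fin (b + 1)), sumSG b, inferInstance,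
        ?_, ?_, ?_⟩
      · rintro (x | x) <;> rfl
      · simp only [Fintype.card_sum, Fintype.card_prod, Fintype.card_fin]
        omega
      · rintro ⟨T, hcard, hclosed⟩
        have hL : ∀ x ∈ T.toLeft, ∀ y ∈ T.toLeft, (x.1, y.2) ∈ T.toLeft := by
          intro x hx y hy
          rw [Finset.mem_toLeft] at *
          exact hclosed _ hx _ hy
        have hR : ∀ x ∈ T.toRight, ∀ y ∈ T.toRight, (x.1, y.2) ∈ T.toRight := by
          intro x hx y hy
          rw [Finset.mem_toRight] at *
          exact hclosed _ hx _ hy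
        have hsum : T.toLeft.card + T.toRight.card = n := by
          rw [Finset.card_toLeft_add_card_toRight, hcard]
        rcases rect_card'' T.toLeft hL with e0 | ⟨i, j, hi1, hi2, hj1, hj2, hij⟩ <;>
          rcases rect_card'' T.toRight hR with f0 | ⟨k, l, hk1, hk2, hl1, hl2, hkl⟩ <;>
          simp -failIfUnchanged only [Fintype.card_fin] at *
        · omega
        · -- only right part
          interval_cases k <;> omega
        · -- only left part
          interval_cases i <;> interval_cases j <;> omega
        · interval_cases i <;> interval_cases j <;> interval_cases k <;> omega
    · -- n even, not divisible by 3, n ≥ 8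
      refine rect_band 3 (n / 2 - 1) n hn (by omega) ?_
      intro i j hi1 hi2 hj1 hj2
      interval_cases i <;> omega
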